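/- Let Ω be as above, let α = (2·C(N,2))^{-1/2} and β = (6·C(N,2))^{-1/2}, and define vectors u_α, u_β ∈ R^{3·C(N,2)} by u_α(v_{ij}^1) = α, u_α(v_{ij}^2) = 0, u_α(v_{ij}^3) = -α, and u_β(v_{ij}^1) = β, u_β(v_{ij}^2) = -2β, u_β(v_{ij}^3) = β for all i < j. Then u_α and u_β are orthogonal unit eigenvectors of Ω corresponding to the eigenvalue 4(N-2). -/

import Mathlib

open Matrix

/-- Index set of pairs `(i,j)` with `i < j` in `[N]`. -/
def PairIdx (N : ℕ) := {p : Fin N × Fin N // p.1 < p.2}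

instance (N : ℕ) : Fintype (PairIdx N) := by unfold PairIdx; infer_instance
instance (N : ℕ) : DecidableEq (PairIdx N) := by unfold PairIdx; infer_instance

/-- The signed adjacency matrix `Ω` on vertices `v_{ij}^m`. -/
def OmegaMat (N : ℕ) : Matrix (PairIdx N × Fin 3) (PairIdx N × Fin 3) ℝ :=
  fun v w =>
    if (({v.1.val.1, v.1.val.2} : Finset (Fin N)) ∩ {w.1.val.1, w.1.val.2}).card = 1 then
      (if v.2 = w.2 then 1 else -1)
    else 0

lemma inter_card (N : ℕ) (i j k l : Fin N) (hij : i ≠ j) :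
    (({i,j} : Finset (Fin N)) ∩ {k,l}).card
      = (if i ∈ ({k,l} : Finset (Fin N)) then 1 else 0)
        + (if j ∈ ({k,l} : Finset (Fin N)) then 1 else 0) := by
  rw [← Finset.filter_mem_eq_inter, Finset.card_filter, Finset.sum_pair hij]

lemma cond_iff (N : ℕ) (i j k l : Fin N) (hij : i ≠ j) :
    (({i,j} : Finset (Fin N)) ∩ {k,l}).card = 1 ↔
      ((i = k ∨ i = l) ↔ ¬(j = k ∨ j = l)) := by
  rw [inter_card N i j k l hij]
  simp only [Finset.mem_insert, Finset.mem_singleton]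
  split_ifs with h1 h2 h2 <;> simp_all

lemma card_filter_pairIdx (N : ℕ) (P : Fin N × Fin N → Prop) [DecidablePred P] :
    (Finset.univ.filter (fun q : PairIdx N => P q.val)).card
      = (Finset.univ.filter (fun z : Fin N × Fin N => z.1 < z.2 ∧ P z)).card := by
  apply Finset.card_bij (fun q _ => q.val)
  · intro q hq
    simp only [Finset.mem_filter, Finset.mem_univ, true_and] at hq ⊢
    exact ⟨q.2, hq⟩
  · intro q₁ _ q₂ _ h
    exact Subtype.ext h
  · intro z hz
    simp only [Finset.mem_filter, Finset.mem_univ, true_and] at hz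
    exact ⟨⟨z, hz.1⟩, Finset.mem_filter.mpr ⟨Finset.mem_univ _, hz.2⟩, rfl⟩

lemma card_cond (N : ℕ) (p : PairIdx N) :
    (Finset.univ.filter (fun q : PairIdx N =>
      (({p.val.1, p.val.2} : Finset (Fin N)) ∩ {q.val.1, q.val.2}).card = 1)).card
      = 2 * (N - 2) := by
  obtain ⟨⟨i, j⟩, hij⟩ := p
  simp only at hij
  have hij' : i ≠ j := ne_of_lt hij
  rw [card_filter_pairIdx N (fun z => (({i,j} : Finset (Fin N)) ∩ {z.1, z.2}).card = 1)]
  have hcard : (({i,j} : Finset (Fin N)) ×ˢ (Finset.univ \ {i,j})).card = 2 * (N - 2) := by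
    rw [Finset.card_product, Finset.card_pair hij',
      Finset.card_sdiff_of_subset (Finset.subset_univ _), Finset.card_pair hij',
      Finset.card_univ, Fintype.card_fin]
  rw [← hcard]
  have hmem : ∀ z : Fin N × Fin N,
      (z ∈ Finset.univ.filter (fun z : Fin N × Fin N =>
        z.1 < z.2 ∧ (({i,j} : Finset (Fin N)) ∩ {z.1, z.2}).card = 1)) ↔
      (z.1 < z.2 ∧ ((i = z.1 ∨ i = z.2) ↔ ¬(j = z.1 ∨ j = z.2))) := by
    intro z
    simp only [Finset.mem_filter, Finset.mem_univ, true_and, cond_iff N i j _ _ hij']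
  have hmem' : ∀ z : Fin N × Fin N,
      (z ∈ ({i,j} : Finset (Fin N)) ×ˢ (Finset.univ \ {i,j})) ↔
      ((z.1 = i ∨ z.1 = j) ∧ ¬(z.2 = i ∨ z.2 = j)) := by
    intro z
    simp [Finset.mem_product]
  apply Finset.card_bij'
    (i := fun z _ => if i = z.1 ∨ j = z.1 then (z.1, z.2) else (z.2, z.1))
    (j := fun z _ => if z.1 < z.2 then (z.1, z.2) else (z.2, z.1))
  · intro z hz
    rw [hmem] at hz
    rw [hmem']
    obtain ⟨hlt, hiff⟩ := hz
    have h12 : z.1 ≠ z.2 := ne_of_lt hlt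
    by_cases h : i = z.1 ∨ j = z.1
    · rw [if_pos h]
      refine ⟨by tauto, ?_⟩
      rcases h with h | h
      · have hR := hiff.mp (Or.inl h)
        rintro (h2 | h2)
        · exact h12 (by rw [← h, h2])
        · exact hR (Or.inr h2.symm)
      · have hL : ¬(i = z.1 ∨ i = z.2) := fun hl => (hiff.mp hl) (Or.inl h)
        rintro (h2 | h2)
        · exact hL (Or.inr h2.symm)
        · exact h12 (by rw [← h, h2])
    · rw [if_neg h]
      push_neg at h
      have h2 : i = z.2 ∨ j = z.2 := by
        by_contra hcon
        push_neg at hcon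
        rcases hiff with ⟨hmp, hmpr⟩
        exact (hmpr (by tauto)).elim (fun hh => h.1 hh) (fun hh => hcon.1 hh)
      exact ⟨by tauto, by tauto⟩
  · intro z hz
    rw [hmem'] at hz
    rw [hmem]
    obtain ⟨h1, h2⟩ := hz
    have h12 : z.1 ≠ z.2 := by rintro h; rw [h] at h1; exact h2 h1
    have key : (i = z.1 ∨ i = z.2) ↔ ¬(j = z.1 ∨ j = z.2) := by
      rcases h1 with h | h
      · constructor
        · rintro _ (hj | hj)
          · exact hij' ((hj.trans h).symm)
          · exact h2 (Or.inr hj.symm)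
        · intro _; exact Or.inl h.symm
      · constructor
        · rintro (hi | hi) _
          · exact hij' (hi.trans h)
          · exact h2 (Or.inl hi.symm)
        · intro hn; exact absurd (Or.inl h.symm) hn
    rcases lt_or_gt_of_ne h12 with hlt | hgt
    · rw [if_pos hlt]; exact ⟨hlt, key⟩
    · rw [if_neg (not_lt_of_gt hgt)]
      exact ⟨hgt, by tauto⟩
  · intro z hz
    rw [hmem] at hz
    by_cases h : i = z.1 ∨ j = z.1
    · rw [if_pos h]
      simp only [if_pos hz.1]
    · rw [if_neg h]
      simp only [if_neg (asymm hz.1 : ¬ z.2 < z.1)]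
  · intro z hz
    rw [hmem'] at hz
    obtain ⟨h1, h2⟩ := hz
    have h12 : z.1 ≠ z.2 := by rintro h; rw [h] at h1; exact h2 h1
    rcases lt_or_gt_of_ne h12 with hlt | hgt
    · rw [if_pos hlt]
      rw [if_pos (by tauto : i = z.1 ∨ j = z.1)]
    · rw [if_neg (not_lt_of_gt hgt)]
      rw [if_neg (by rintro (h | h) <;> exact h2 (by tauto))]

lemma card_pairIdx (N : ℕ) : Fintype.card (PairIdx N) = N.choose 2 := by
  have h1 : Fintype.card (PairIdx N)
      = (Finset.univ.filter (fun p : Fin N × Fin N => p.1 < p.2)).card :=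
    Fintype.card_subtype _
  rw [h1, Finset.card_filter, Fintype.sum_prod_type]
  have h2 : ∀ a : Fin N, (∑ b : Fin N, if a < b then (1:ℕ) else 0) = N - 1 - a := by
    intro a
    rw [← Finset.card_filter]
    have : Finset.univ.filter (fun b : Fin N => a < b) = Finset.Ioi a := by
      ext b; simp
    rw [this, Fin.card_Ioi]
  simp only [h2]
  rw [Fin.sum_univ_eq_sum_range (fun a => N - 1 - a), ← Finset.sum_range_reflect]
  rw [Nat.choose_two_right, ← Finset.sum_range_id]
  apply Finset.sum_congr rfl
  intro x hx
  simp only [Finset.mem_range] at hx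
  omega

lemma mulVec_color (N : ℕ) (f : Fin 3 → ℝ) (p : PairIdx N) (m : Fin 3) :
    (OmegaMat N).mulVec (fun v : PairIdx N × Fin 3 => f v.2) (p, m)
      = ((2 * (N - 2) : ℕ) : ℝ) * (∑ n : Fin 3, (if m = n then (1:ℝ) else -1) * f n) := by
  unfold Matrix.mulVec dotProduct OmegaMat
  rw [Fintype.sum_prod_type]
  have step : ∀ q : PairIdx N,
      (∑ n : Fin 3, (if (({p.val.1, p.val.2} : Finset (Fin N)) ∩ {q.val.1, q.val.2}).card = 1 then
          (if m = n then (1:ℝ) else -1) else 0) * f n)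
      = if (({p.val.1, p.val.2} : Finset (Fin N)) ∩ {q.val.1, q.val.2}).card = 1 then
          (∑ n : Fin 3, (if m = n then (1:ℝ) else -1) * f n) else 0 := by
    intro q
    split_ifs with h <;> simp [h]
  simp only [step]
  rw [Finset.sum_ite, Finset.sum_const_zero, add_zero, Finset.sum_const, card_cond,
    nsmul_eq_mul]

lemma eigen_color (N : ℕ) (hN : 2 ≤ N) (f : Fin 3 → ℝ) (hf : f 0 + f 1 + f 2 = 0) :
    (OmegaMat N).mulVec (fun v : PairIdx N × Fin 3 => f v.2)
      = (4 * ((N : ℝ) - 2)) • (fun v : PairIdx N × Fin 3 => f v.2) := by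
  funext v
  obtain ⟨p, m⟩ := v
  rw [mulVec_color]
  have hcast : ((2 * (N - 2) : ℕ) : ℝ) = 2 * ((N : ℝ) - 2) := by
    push_cast [Nat.cast_sub hN]
    ring
  rw [hcast]
  simp only [Pi.smul_apply, smul_eq_mul]
  fin_cases m <;>
    · simp [Fin.sum_univ_three]
      nlinarith [hf]

lemma dot_color (N : ℕ) (f g : Fin 3 → ℝ) :
    (fun v : PairIdx N × Fin 3 => f v.2) ⬝ᵥ (fun v : PairIdx N × Fin 3 => g v.2)
      = (N.choose 2 : ℝ) * ∑ n : Fin 3, f n * g n := by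
  unfold dotProduct
  rw [Fintype.sum_prod_type]
  dsimp only
  rw [Finset.sum_const, Finset.card_univ, card_pairIdx, nsmul_eq_mul]

/-- With `α = (2·C(N,2))^{-1/2}` and `β = (6·C(N,2))^{-1/2}`, the vectors `u_α` (taking values
`α, 0, -α` on colors 1,2,3) and `u_β` (taking values `β, -2β, β`) are orthogonal unit
eigenvectors of `Ω` for the eigenvalue `4(N-2)`. -/
theorem omegaMat_ualpha_ubeta_eigenvectors (N : ℕ) (hN : 2 ≤ N) :
    letI α : ℝ := (Real.sqrt (2 * N.choose 2))⁻¹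
    letI β : ℝ := (Real.sqrt (6 * N.choose 2))⁻¹
    letI uα : PairIdx N × Fin 3 → ℝ := fun v => ![α, 0, -α] v.2
    letI uβ : PairIdx N × Fin 3 → ℝ := fun v => ![β, -2 * β, β] v.2
    (OmegaMat N).mulVec uα = (4 * ((N : ℝ) - 2)) • uα ∧
    (OmegaMat N).mulVec uβ = (4 * ((N : ℝ) - 2)) • uβ ∧
    uα ⬝ᵥ uβ = 0 ∧ uα ⬝ᵥ uα = 1 ∧ uβ ⬝ᵥ uβ = 1 := by
  set α : ℝ := (Real.sqrt (2 * N.choose 2))⁻¹ with hα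
  set β : ℝ := (Real.sqrt (6 * N.choose 2))⁻¹ with hβ
  have hc : (0:ℝ) < (N.choose 2 : ℝ) := by exact_mod_cast Nat.choose_pos hN
  have hα2 : α * α = (2 * (N.choose 2 : ℝ))⁻¹ := by
    rw [hα, ← mul_inv, Real.mul_self_sqrt (by positivity)]
  have hβ2 : β * β = (6 * (N.choose 2 : ℝ))⁻¹ := by
    rw [hβ, ← mul_inv, Real.mul_self_sqrt (by positivity)]
  refine ⟨eigen_color N hN ![α, 0, -α] (by simp), eigen_color N hN ![β, -2*β, β] (by simp [Fin.sum_univ_three]; try ring), ?_, ?_, ?_⟩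
  · rw [dot_color]
    simp [Fin.sum_univ_three]
  · rw [dot_color]
    simp only [Fin.sum_univ_three]
    simp only [Matrix.cons_val_zero, Matrix.cons_val_one, Matrix.head_cons,
      Matrix.cons_val_two, Matrix.tail_cons]
    rw [show α * α + 0 * 0 + -α * -α = 2 * (α * α) by ring, hα2]
    field_simp
  · rw [dot_color]
    simp only [Fin.sum_univ_three]
    simp only [Matrix.cons_val_zero, Matrix.cons_val_one, Matrix.head_cons,
      Matrix.cons_val_two, Matrix.tail_cons]
    rw [show β * β + -2*β * (-2*β) + β * β = 6 * (β * β) by ring, hβ2]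
    field_simp
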